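/- Let p, q be nonzero complex numbers, let A be a (not necessarily commutative) ℂ-algebra, and let θ, φ, Θ, Φ, a, b, c, d ∈ A be such that: the type I relations hold, namely θΘ = Θθ, θΦ = q·Φθ, φΦ = Φφ, φΘ = p·Θφ + (1 - pq)·Φθ; each of a, b, c, d commutes with each of θ, φ, Θ, Φ; and a, b, c, d satisfy the GL_{p,q}(2) relations ab = p·ba, cd = p·dc, ac = q·ca, bd = q·db, p·bc = q·cb, and ad - da = (p - q⁻¹)·bc. Then the transformed elements θ' = aθ + bφ, φ' = cθ + dφ, Θ' = aΘ + bΦ, Φ' = cΘ + dΦ satisfy the same type I relations: θ'Θ' = Θ'θ', θ'Φ' = q·Φ'θ', φ'Φ' = Φ'φ', and φ'Θ' = p·Θ'φ' + (1 - pq)·Φ'θ'. -/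
import Mathlib


/-- The type I relations between the coordinates and the differentials of the quantum
exterior plane are preserved under the action of a quantum matrix with entries
satisfying the `GL_{p,q}(2)` relations and commuting with coordinates and
differentials. -/
theorem typeI_relations_covariance (p q : ℂ) (hp : p ≠ 0) (hq : q ≠ 0)
    {A : Type*} [Ring A] [Algebra ℂ A] (θ φ Θ Φ a b c d : A)
    (h1 : θ * Θ = Θ * θ) (h2 : θ * Φ = q • (Φ * θ)) (h3 : φ * Φ = Φ * φ)
    (h4 : φ * Θ = p • (Θ * φ) + (1 - p * q) • (Φ * θ))
    (hcomm : ∀ t ∈ ({a, b, c, d} : Set A), ∀ x ∈ ({θ, φ, Θ, Φ} : Set A), t * x = x * t)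
    (hab : a * b = p • (b * a)) (hcd : c * d = p • (d * c))
    (hac : a * c = q • (c * a)) (hbd : b * d = q • (d * b))
    (hbc : p • (b * c) = q • (c * b))
    (had : a * d - d * a = (p - q⁻¹) • (b * c)) :
    (a * θ + b * φ) * (a * Θ + b * Φ) = (a * Θ + b * Φ) * (a * θ + b * φ) ∧
      (a * θ + b * φ) * (c * Θ + d * Φ) = q • ((c * Θ + d * Φ) * (a * θ + b * φ)) ∧
      (c * θ + d * φ) * (c * Θ + d * Φ) = (c * Θ + d * Φ) * (c * θ + d * φ) ∧
      (c * θ + d * φ) * (a * Θ + b * Φ) =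
        p • ((a * Θ + b * Φ) * (c * θ + d * φ)) +
          (1 - p * q) • ((c * Θ + d * Φ) * (a * θ + b * φ)) := by
  have key : ∀ (s t x D : A), t * x = x * t → (s * x) * (t * D) = (s * t) * (x * D) := by
    intro s t x D h
    rw [mul_assoc, ← mul_assoc x t D, ← h, mul_assoc t x D, ← mul_assoc]
  have ha : a ∈ ({a, b, c, d} : Set A) := by simp
  have hb : b ∈ ({a, b, c, d} : Set A) := by simp
  have hc : c ∈ ({a, b, c, d} : Set A) := by simp
  have hd : d ∈ ({a, b, c, d} : Set A) := by simp
  have hθ : θ ∈ ({θ, φ, Θ, Φ} : Set A) := by simp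
  have hφ : φ ∈ ({θ, φ, Θ, Φ} : Set A) := by simp
  have hΘ : Θ ∈ ({θ, φ, Θ, Φ} : Set A) := by simp
  have hΦ : Φ ∈ ({θ, φ, Θ, Φ} : Set A) := by simp
  have haθ := hcomm a ha θ hθ
  have hbθ := hcomm b hb θ hθ
  have hcθ := hcomm c hc θ hθ
  have hdθ := hcomm d hd θ hθ
  have haφ := hcomm a ha φ hφ
  have hbφ := hcomm b hb φ hφ
  have hcφ := hcomm c hc φ hφ
  have hdφ := hcomm d hd φ hφ
  have haΘ := hcomm a ha Θ hΘ
  have hbΘ := hcomm b hb Θ hΘ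
  have hcΘ := hcomm c hc Θ hΘ
  have hdΘ := hcomm d hd Θ hΘ
  have haΦ := hcomm a ha Φ hΦ
  have hbΦ := hcomm b hb Φ hΦ
  have hcΦ := hcomm c hc Φ hΦ
  have hdΦ := hcomm d hd Φ hΦ
  -- LHS-type products: (entry * coordinate) * (entry * differential)
  have e1 := key a a θ Θ haθ
  have e2 := key a b θ Φ hbθ
  have e3 := key b a φ Θ haφ
  have e4 := key b b φ Φ hbφ
  have e5 := key a c θ Θ hcθ
  have e6 := key a d θ Φ hdθ
  have e7 := key b c φ Θ hcφ
  have e8 := key b d φ Φ hdφ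
  have e9 := key c c θ Θ hcθ
  have e10 := key c d θ Φ hdθ
  have e11 := key d c φ Θ hcφ
  have e12 := key d d φ Φ hdφ
  have e13 := key c a θ Θ haθ
  have e14 := key c b θ Φ hbθ
  have e15 := key d a φ Θ haφ
  have e16 := key d b φ Φ hbφ
  -- RHS-type products: (entry * differential) * (entry * coordinate)
  have f1 := key a a Θ θ haΘ
  have f2 := key a b Θ φ hbΘ
  have f3 := key a c Θ θ hcΘ
  have f4 := key a d Θ φ hdΘ
  have f5 := key b a Φ θ haΦ
  have f6 := key b b Φ φ hbΦ
  have f7 := key b c Φ θ hcΦ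
  have f8 := key b d Φ φ hdΦ
  have f9 := key c a Θ θ haΘ
  have f10 := key c b Θ φ hbΘ
  have f11 := key c c Θ θ hcΘ
  have f12 := key c d Θ φ hdΘ
  have f13 := key d a Φ θ haΦ
  have f14 := key d b Φ φ hbΦ
  have f15 := key d c Φ θ hcΦ
  have f16 := key d d Φ φ hdΦ
  have had' : a * d = d * a + (p - q⁻¹) • (b * c) := by rw [← had]; abel
  have hcb : c * b = (q⁻¹ * p) • (b * c) := by
    rw [mul_smul, hbc, smul_smul, inv_mul_cancel₀ hq, one_smul]
  refine ⟨?_, ?_, ?_, ?_⟩ <;>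
  · simp only [add_mul, mul_add, e1, e2, e3, e4, e5, e6, e7, e8, e9, e10, e11, e12, e13,
      e14, e15, e16, f1, f2, f3, f4, f5, f6, f7, f8, f9, f10, f11, f12, f13, f14, f15, f16,
      h1, h2, h3, h4, had', hcb, hab, hcd, hac, hbd,
      smul_mul_assoc, mul_smul_comm, smul_add, smul_smul, add_mul, mul_add]
    match_scalars <;> field_simp <;> ring
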